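/- There exists an absolute constant c ≥ 1 with the following property: for all M₁, M₂ > 0, all nonempty function classes F₁ ⊆ [−M₁,M₁]^X and F₂ ⊆ [−M₂,M₂]^X, every probability distribution μ over X, and every ε > 0, it holds that log N_{μ,F₂}(F₁, ε) ≤ c · (M₁M₂/ε)² · ( 1 + log N_{μ,F₁}(F₂, ε/8) ). -/

import Mathlib

open scoped ENNReal Pointwise

noncomputable section

namespace OI

/-- Expectation of a real-valued function under a probability mass function. -/
def pexp {α : Type*} (q : PMF α) (f : α → ℝ) : ℝ := ∑' a, (q a).toReal * f a

/-- Inner product of two functions w.r.t. the distribution `μ`. -/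
def inn {X : Type*} (μ : PMF X) (f g : X → ℝ) : ℝ := pexp μ fun x => f x * g x

/-- Dual Minkowski (semi)norm of `f` w.r.t. the class `F`. -/
def dnorm {X : Type*} (μ : PMF X) (F : Set (X → ℝ)) (f : X → ℝ) : ℝ :=
  sSup ((fun g => |inn μ f g|) '' F)

/-- `C` is an ε-covering of `G` w.r.t. the seminorm defined by `F`. -/
def IsCover {X : Type*} (μ : PMF X) (F G : Set (X → ℝ)) (ε : ℝ) (C : Set (X → ℝ)) : Prop :=
  C ⊆ G ∧ ∀ g ∈ G, ∃ c ∈ C, dnorm μ F (g - c) ≤ ε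

/-- Covering number `N_{μ,F}(G, ε)` (`⊤` if no finite covering exists). -/
def covN {X : Type*} (μ : PMF X) (F G : Set (X → ℝ)) (ε : ℝ) : ℕ∞ :=
  ⨅ (C : Set (X → ℝ)) (_ : IsCover μ F G ε C), C.encard

/-- Base-2 logarithm of an extended natural number (junk value on `⊤`). -/
def elog2 (N : ℕ∞) : ℝ := Real.logb 2 (N.toNat : ℝ)

/-- Bernoulli distribution on `Bool` with mean (the truncation to `[0,1]` of) `r`. -/
def bern (r : ℝ) : PMF Bool := PMF.bernoulli (min (Real.toNNReal r) 1) (min_le_right _ _)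

/-- The distribution `μ_p` of individual-outcome pairs. -/
def exDist {X : Type*} (μ : PMF X) (p : X → ℝ) : PMF (X × Bool) :=
  μ.bind fun x => (bern (p x)).map fun o => (x, o)

/-- `n` i.i.d. samples from `q`. -/
def iid {α : Type*} (q : PMF α) : (n : ℕ) → PMF (Fin n → α)
  | 0 => PMF.pure Fin.elim0
  | n + 1 => (iid q n).bind fun v => q.map fun a => Fin.cons a v

/-- Probability of an event under a PMF. -/
def prob {α : Type*} (q : PMF α) (E : Set α) : ℝ≥0∞ := q.toOuterMeasure E

/-- A (possibly randomized) `n`-sample learner. -/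
abbrev Learner (X : Type*) (n : ℕ) := (Fin n → X × Bool) → PMF (X → ℝ)

/-- Distribution of the learner output on `n` i.i.d. samples from `μ_{p*}`. -/
def outDist {X : Type*} (μ : PMF X) (pstar : X → ℝ) {n : ℕ} (A : Learner X n) :
    PMF (X → ℝ) :=
  (iid (exDist μ pstar) n).bind A

/-- `p` is a predictor, i.e. takes values in `[0,1]`. -/
def Predictor {X : Type*} (p : X → ℝ) : Prop := ∀ x, p x ∈ Set.Icc (0 : ℝ) 1

/-- `d` takes values in `[-1,1]`. -/
def Dist1 {X : Type*} (d : X → ℝ) : Prop := ∀ x, d x ∈ Set.Icc (-1 : ℝ) 1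

/-- The class `[0,1]^X` of all predictors. -/
def allPred (X : Type*) : Set (X → ℝ) := {p | Predictor p}

/-- The learner `A` succeeds for target `pstar`: with probability at least `1 - δ` it outputs
a predictor whose maximum distinguishing advantage w.r.t. `pstar` over `D` is at most `ε`. -/
def Achieves {X : Type*} (μ : PMF X) (D : Set (X → ℝ)) (ε δ : ℝ) (pstar : X → ℝ) {n : ℕ}
    (A : Learner X n) : Prop :=
  ENNReal.ofReal (1 - δ) ≤
    prob (outDist μ pstar A) {p | Predictor p ∧ dnorm μ D (p - pstar) ≤ ε}

/-- The agnostic benchmark `inf_{p' ∈ P} ‖p' - pstar‖_{μ,D}`. -/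
def agTarget {X : Type*} (μ : PMF X) (P D : Set (X → ℝ)) (pstar : X → ℝ) : ℝ :=
  sInf ((fun p' => dnorm μ D (p' - pstar)) '' P)

/-- The learner `A` succeeds agnostically for target `pstar`. -/
def AchievesAg {X : Type*} (μ : PMF X) (P D : Set (X → ℝ)) (ε δ : ℝ) (pstar : X → ℝ) {n : ℕ}
    (A : Learner X n) : Prop :=
  ENNReal.ofReal (1 - δ) ≤
    prob (outDist μ pstar A)
      {p | Predictor p ∧ dnorm μ D (p - pstar) ≤ agTarget μ P D pstar + ε}

/-- Distribution-specific realizable OI learner. -/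
def DSRL {X : Type*} (μ : PMF X) (P D : Set (X → ℝ)) (ε δ : ℝ) (n : ℕ)
    (A : Learner X n) : Prop :=
  ∀ pstar ∈ P, Achieves μ D ε δ pstar A

/-- Distribution-specific agnostic OI learner. -/
def DSAL {X : Type*} (μ : PMF X) (P D : Set (X → ℝ)) (ε δ : ℝ) (n : ℕ)
    (A : Learner X n) : Prop :=
  ∀ pstar : X → ℝ, Predictor pstar → AchievesAg μ P D ε δ pstar A

/-- Distribution-free realizable OI learner. -/
def DFRL {X : Type*} (P D : Set (X → ℝ)) (ε δ : ℝ) (n : ℕ) (A : Learner X n) : Prop :=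
  ∀ μ : PMF X, DSRL μ P D ε δ n A

/-- Distribution-free agnostic OI learner. -/
def DFAL {X : Type*} (P D : Set (X → ℝ)) (ε δ : ℝ) (n : ℕ) (A : Learner X n) : Prop :=
  ∀ μ : PMF X, DSAL μ P D ε δ n A

/-- Sample complexity of distribution-specific realizable OI. -/
def SAMPDSR {X : Type*} (μ : PMF X) (P D : Set (X → ℝ)) (ε δ : ℝ) : ℕ∞ :=
  ⨅ (n : ℕ) (_ : ∃ A : Learner X n, DSRL μ P D ε δ n A), (n : ℕ∞)

/-- Sample complexity of distribution-specific agnostic OI. -/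
def SAMPDSA {X : Type*} (μ : PMF X) (P D : Set (X → ℝ)) (ε δ : ℝ) : ℕ∞ :=
  ⨅ (n : ℕ) (_ : ∃ A : Learner X n, DSAL μ P D ε δ n A), (n : ℕ∞)

/-- Sample complexity of distribution-free realizable OI. -/
def SAMPDFR {X : Type*} (P D : Set (X → ℝ)) (ε δ : ℝ) : ℕ∞ :=
  ⨅ (n : ℕ) (_ : ∃ A : Learner X n, DFRL P D ε δ n A), (n : ℕ∞)

/-- Sample complexity of distribution-free agnostic OI. -/
def SAMPDFA {X : Type*} (P D : Set (X → ℝ)) (ε δ : ℝ) : ℕ∞ :=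
  ⨅ (n : ℕ) (_ : ∃ A : Learner X n, DFAL P D ε δ n A), (n : ℕ∞)

/-- The points `x 0, …, x (n-1)` are `γ`-fat shattered by `F`. -/
def Shatters {X : Type*} (F : Set (X → ℝ)) (γ : ℝ) {n : ℕ} (x : Fin n → X) : Prop :=
  ∃ r : Fin n → ℝ, ∀ b : Fin n → Bool, ∃ f ∈ F,
    ∀ i, γ ≤ (if b i then (1 : ℝ) else -1) * (f (x i) - r i)

/-- The `γ`-fat-shattering dimension of `F`. -/
def fatDim {X : Type*} (F : Set (X → ℝ)) (γ : ℝ) : ℕ∞ :=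
  ⨆ (n : ℕ) (_ : ∃ x : Fin n → X, Shatters F γ x), (n : ℕ∞)

end OI


open OI

namespace GaussCore
open MeasureTheory Real
variable {ι : Type} [Fintype ι]

variable {ι : Type} [Fintype ι]

def ip (x y : ι → ℝ) : ℝ := ∑ i, x i * y i

def sq (x : ι → ℝ) : ℝ := ∑ i, (x i)^2

lemma sq_nonneg' (x : ι → ℝ) : 0 ≤ sq x := Finset.sum_nonneg fun _ _ => _root_.sq_nonneg _

lemma ip_self (x : ι → ℝ) : ip x x = sq x :=
  Finset.sum_congr rfl fun i _ => by ring

lemma ip_sub_left (x y z : ι → ℝ) : ip (x - y) z = ip x z - ip y z := by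
  unfold ip
  rw [← Finset.sum_sub_distrib]
  exact Finset.sum_congr rfl fun i _ => by simp [Pi.sub_apply]; ring

lemma ip_neg_right (x y : ι → ℝ) : ip x (-y) = - ip x y := by
  unfold ip
  rw [← Finset.sum_neg_distrib]
  exact Finset.sum_congr rfl fun i _ => by simp

lemma ip_comm (x y : ι → ℝ) : ip x y = ip y x :=
  Finset.sum_congr rfl fun i _ => by ring

lemma ip_smul_left (c : ℝ) (x y : ι → ℝ) : ip (c • x) y = c * ip x y := by
  unfold ip
  rw [Finset.mul_sum]
  exact Finset.sum_congr rfl fun i _ => by simp [Pi.smul_apply]; ring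

lemma sq_smul (c : ℝ) (x : ι → ℝ) : sq (c • x) = c^2 * sq x := by
  unfold sq
  rw [Finset.mul_sum]
  exact Finset.sum_congr rfl fun i _ => by simp [Pi.smul_apply]; ring

lemma sq_add (x y : ι → ℝ) : sq (x + y) = sq x + 2 * ip x y + sq y := by
  have : ∀ i : ι, (x + y) i ^ 2 = x i ^2 + 2 * (x i * y i) + y i ^ 2 := fun i => by
    simp [Pi.add_apply]; ring
  unfold sq ip
  rw [Finset.sum_congr rfl fun i _ => this i, Finset.sum_add_distrib, Finset.sum_add_distrib,
    ← Finset.mul_sum]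

lemma cont_ip (y : ι → ℝ) : Continuous fun x : ι → ℝ => ip x y :=
  continuous_finset_sum _ fun i _ => (continuous_apply i).mul continuous_const

lemma cont_sq : Continuous fun x : ι → ℝ => sq x :=
  continuous_finset_sum _ fun i _ => ((continuous_apply i).pow 2)

def gpdf (x : ι → ℝ) : ℝ≥0∞ := ENNReal.ofReal (Real.exp (-sq x / 2))

lemma meas_gpdf : Measurable (gpdf (ι := ι)) :=
  ENNReal.measurable_ofReal.comp
    (Real.continuous_exp.comp ((cont_sq.neg).div_const 2)).measurable

def gm : Measure (ι → ℝ) := volume.withDensity gpdf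

lemma gm_apply {s : Set (ι → ℝ)} (hs : MeasurableSet s) : gm s = ∫⁻ x in s, gpdf x :=
  withDensity_apply _ hs

lemma gm_univ_lt_top : gm (ι := ι) Set.univ < ⊤ := by
  rw [gm_apply MeasurableSet.univ, Measure.restrict_univ]
  have h1 : ∀ x : ι → ℝ, gpdf x = ENNReal.ofReal (∏ i, Real.exp (-(x i)^2/2)) := by
    intro x
    unfold gpdf
    rw [← Real.exp_sum]
    congr 1
    unfold sq
    rw [← Finset.sum_div, Finset.sum_neg_distrib, neg_div]
  simp_rw [h1]
  have hInt : Integrable (fun x : ι → ℝ => ∏ i, Real.exp (-(x i)^2/2)) := by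
    apply Integrable.fintype_prod (f := fun _ u => Real.exp (-(u)^2/2))
    intro i
    have := integrable_exp_neg_mul_sq (b := (1/2 : ℝ)) (by norm_num)
    convert this using 2 with u
    ring_nf
  exact hInt.lintegral_lt_top

lemma gm_univ_pos : 0 < gm (ι := ι) Set.univ := by
  rw [gm_apply MeasurableSet.univ, Measure.restrict_univ]
  rw [lintegral_pos_iff_support meas_gpdf]
  have : Function.support (gpdf (ι := ι)) = Set.univ := by
    ext x
    simp [gpdf, Function.mem_support, ENNReal.ofReal_eq_zero, not_le, Real.exp_pos]
  rw [this]
  have : (volume : Measure (ι → ℝ)) (Set.univ.pi fun _ : ι => Set.Ioo (0:ℝ) 1) = 1 := by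
    rw [volume_pi_pi]
    simp
  calc (0:ℝ≥0∞) < 1 := by norm_num
    _ = _ := this.symm
    _ ≤ _ := measure_mono (Set.subset_univ _)


lemma meas_ip (y : ι → ℝ) : Measurable fun x : ι → ℝ => ip x y := (cont_ip y).measurable

lemma sq_neg (x : ι → ℝ) : sq (-x) = sq x := by
  have := sq_smul (-1 : ℝ) x
  simpa using this

lemma gpdf_neg (x : ι → ℝ) : gpdf (-x) = gpdf x := by unfold gpdf; rw [sq_neg]

lemma gpdf_add (x θ : ι → ℝ) :
    gpdf (x + θ) = ENNReal.ofReal (Real.exp (-sq θ / 2)) *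
      (ENNReal.ofReal (Real.exp (-ip x θ)) * gpdf x) := by
  unfold gpdf
  rw [← ENNReal.ofReal_mul (Real.exp_nonneg _), ← ENNReal.ofReal_mul (by positivity),
    ← Real.exp_add, ← Real.exp_add]
  congr 2
  rw [sq_add]
  ring

/-- Translation lower bound for symmetric sets. -/
lemma gm_translate {C : Set (ι → ℝ)} (hC : MeasurableSet C) (hsym : ∀ x ∈ C, -x ∈ C)
    (θ : ι → ℝ) :
    ENNReal.ofReal (Real.exp (-sq θ / 2)) * gm C ≤ gm {x | x - θ ∈ C} := by
  classical
  have hS : MeasurableSet {x : ι → ℝ | x - θ ∈ C} := by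
    have : {x : ι → ℝ | x - θ ∈ C} = (fun x => x - θ) ⁻¹' C := rfl
    rw [this]
    exact hC.preimage (measurable_id.sub_const θ)
  -- E t := ∫⁻ x in C, ofReal (exp (t * ip x θ)) * gpdf x
  set E : ℝ → ℝ≥0∞ := fun t => ∫⁻ x, C.indicator (fun y => ENNReal.ofReal (Real.exp (t * ip y θ)) * gpdf y) x with hE
  have hmeas : ∀ t : ℝ, Measurable fun y : ι → ℝ => ENNReal.ofReal (Real.exp (t * ip y θ)) * gpdf y := by
    intro t
    exact (ENNReal.measurable_ofReal.comp
      (Real.continuous_exp.measurable.comp ((meas_ip θ).const_mul t))).mul meas_gpdf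
  -- step 1: gm {x | x - θ ∈ C} = ofReal (exp (-sq θ/2)) * E (-1)
  have step1 : gm {x | x - θ ∈ C} = ENNReal.ofReal (Real.exp (-sq θ / 2)) * E (-1) := by
    rw [gm_apply hS, ← lintegral_indicator hS _]
    have := lintegral_add_right_eq_self (μ := (volume : Measure (ι → ℝ))) (fun x => ({x : ι → ℝ | x - θ ∈ C}).indicator gpdf x) θ
    rw [← this]
    rw [hE, ← lintegral_const_mul _ (Measurable.indicator (hmeas _) hC)]
    congr 1
    ext x
    by_cases hx : x ∈ C
    · have hx2 : x + θ ∈ {x : ι → ℝ | x - θ ∈ C} := by simp [Set.mem_setOf_eq, hx]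
      rw [Set.indicator_of_mem hx2, Set.indicator_of_mem hx, gpdf_add]
      ring_nf
    · have hx2 : x + θ ∉ {x : ι → ℝ | x - θ ∈ C} := by simp [Set.mem_setOf_eq, hx]
      rw [Set.indicator_of_notMem hx2, Set.indicator_of_notMem hx, mul_zero]
  -- step 2: E (-1) = E 1 by symmetry
  have step2 : E (-1) = E 1 := by
    rw [hE]
    have hneg := (Measure.measurePreserving_neg (volume : Measure (ι → ℝ))).lintegral_comp
      (Measurable.indicator (hmeas 1) hC)
    rw [show (1:ℝ) = 1 from rfl] at *
    calc (∫⁻ x, C.indicator (fun y => ENNReal.ofReal (Real.exp ((-1) * ip y θ)) * gpdf y) x)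
        = ∫⁻ x, C.indicator (fun y => ENNReal.ofReal (Real.exp (1 * ip y θ)) * gpdf y) (-x) := by
          congr 1; ext x
          by_cases hx : x ∈ C
          · rw [Set.indicator_of_mem hx, Set.indicator_of_mem (hsym x hx),
              ip_comm (-x), ip_neg_right, ip_comm, gpdf_neg]
            ring_nf
          · have : -x ∉ C := fun h => hx (by simpa using hsym _ h)
            rw [Set.indicator_of_notMem hx, Set.indicator_of_notMem this]
      _ = _ := hneg
  -- step 3: E (-1) + E 1 ≥ 2 * gm C
  have step3 : 2 * gm C ≤ E (-1) + E 1 := by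
    rw [hE, ← lintegral_add_left (Measurable.indicator (hmeas _) hC)]
    rw [gm_apply hC, ← lintegral_indicator hC _, ← lintegral_const_mul _ (Measurable.indicator meas_gpdf hC)]
    apply lintegral_mono
    intro x
    by_cases hx : x ∈ C
    · simp only [Set.indicator_of_mem hx]
      rw [← add_mul]
      apply mul_le_mul_left
      have h2 : (2:ℝ) ≤ Real.exp (-1 * ip x θ) + Real.exp (1 * ip x θ) := by
        linarith [Real.add_one_le_exp (-1 * ip x θ), Real.add_one_le_exp (1 * ip x θ)]
      calc (2:ℝ≥0∞) = ENNReal.ofReal (2:ℝ) := by norm_num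
        _ ≤ ENNReal.ofReal (Real.exp (-1 * ip x θ) + Real.exp (1 * ip x θ)) := ENNReal.ofReal_le_ofReal h2
        _ = _ := ENNReal.ofReal_add (Real.exp_nonneg _) (Real.exp_nonneg _)
    · simp [Set.indicator_of_notMem hx]
  -- combine
  rw [step1]
  apply mul_le_mul_right
  have : E (-1) + E 1 = 2 * E (-1) := by rw [step2]; ring
  rw [this] at step3
  exact (ENNReal.mul_le_mul_iff_right (by norm_num) (by norm_num)).mp step3


lemma gm_tail_one (ρ : ι → ℝ) {M s : ℝ} (hM : 0 < M) (hρ : sq ρ ≤ M^2) (hs : 0 < s) :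
    gm {x | s ≤ ip x ρ} ≤ ENNReal.ofReal (Real.exp (-(s^2)/(2*M^2))) * gm (ι := ι) Set.univ := by
  set t : ℝ := s / M^2 with ht
  have htpos : 0 < t := by positivity
  have hSet : MeasurableSet {x : ι → ℝ | s ≤ ip x ρ} :=
    measurableSet_le measurable_const (meas_ip ρ)
  have key : gm {x | s ≤ ip x ρ} ≤ ∫⁻ x, ENNReal.ofReal (Real.exp (t * (ip x ρ - s))) * gpdf x := by
    rw [gm_apply hSet, ← lintegral_indicator hSet _]
    apply lintegral_mono
    intro x
    by_cases hx : x ∈ {x : ι → ℝ | s ≤ ip x ρ}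
    · rw [Set.indicator_of_mem hx]
      nth_rewrite 1 [← one_mul (gpdf x)]
      apply mul_le_mul_left
      have h0 : (0:ℝ) ≤ t * (ip x ρ - s) := mul_nonneg htpos.le (by simp at hx; linarith)
      calc (1:ℝ≥0∞) = ENNReal.ofReal 1 := by norm_num
        _ ≤ _ := ENNReal.ofReal_le_ofReal (Real.one_le_exp h0)
    · rw [Set.indicator_of_notMem hx]; exact zero_le
  have ident : ∀ x : ι → ℝ, ENNReal.ofReal (Real.exp (t * (ip x ρ - s))) * gpdf x
      = ENNReal.ofReal (Real.exp (t^2 * sq ρ / 2 - t*s)) * gpdf (x + (-(t • ρ))) := by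
    intro x
    unfold gpdf
    rw [← ENNReal.ofReal_mul (Real.exp_nonneg _), ← ENNReal.ofReal_mul (Real.exp_nonneg _),
      ← Real.exp_add, ← Real.exp_add]
    congr 2
    have hneg : sq (x + (-(t • ρ))) = sq x - 2 * (t * ip x ρ) + t^2 * sq ρ := by
      rw [sq_add, show -(t • ρ) = (-t) • ρ by simp, ip_comm x ((-t) • ρ), ip_smul_left, sq_smul,
        ip_comm]
      ring
    rw [hneg]
    ring
  have meas_shift : Measurable fun x : ι → ℝ => gpdf (x + (-(t • ρ))) :=
    meas_gpdf.comp (measurable_id.add_const _)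
  calc gm {x | s ≤ ip x ρ} ≤ _ := key
    _ = ENNReal.ofReal (Real.exp (t^2 * sq ρ / 2 - t*s)) * gm (ι := ι) Set.univ := by
        simp_rw [ident]
        rw [lintegral_const_mul _ meas_shift]
        congr 1
        rw [gm_apply MeasurableSet.univ, Measure.restrict_univ]
        exact lintegral_add_right_eq_self (μ := (volume : Measure (ι → ℝ))) gpdf (-(t • ρ))
    _ ≤ _ := by
        apply mul_le_mul_left
        apply ENNReal.ofReal_le_ofReal
        apply Real.exp_le_exp.mpr
        have h1 : t^2 * sq ρ / 2 ≤ t^2 * M^2/2 := by nlinarith [_root_.sq_nonneg t]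
        have h2 : t^2*M^2/2 - t*s = -(s^2)/(2*M^2) := by
          rw [ht]; field_simp; ring
        linarith

lemma gm_tail_abs (ρ : ι → ℝ) {M s : ℝ} (hM : 0 < M) (hρ : sq ρ ≤ M^2) (hs : 0 < s) :
    gm {x | s ≤ |ip x ρ|} ≤ 2 * ENNReal.ofReal (Real.exp (-(s^2)/(2*M^2))) * gm (ι := ι) Set.univ := by
  have hsub : {x : ι → ℝ | s ≤ |ip x ρ|} ⊆ {x | s ≤ ip x ρ} ∪ {x | s ≤ ip x (-ρ)} := by
    intro x hx
    simp only [Set.mem_setOf_eq, Set.mem_union] at *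
    rcases abs_cases (ip x ρ) with ⟨h, _⟩ | ⟨h, _⟩
    · left; linarith
    · right; rw [ip_neg_right]; linarith
  have hρ' : sq (-ρ) ≤ M^2 := by
    rw [show -ρ = (-1 : ℝ) • ρ by simp, sq_smul]; simpa using hρ
  calc gm {x | s ≤ |ip x ρ|} ≤ gm {x | s ≤ ip x ρ} + gm {x | s ≤ ip x (-ρ)} :=
        le_trans (measure_mono hsub) (measure_union_le _ _)
    _ ≤ ENNReal.ofReal (Real.exp (-(s^2)/(2*M^2))) * gm (ι := ι) Set.univ
        + ENNReal.ofReal (Real.exp (-(s^2)/(2*M^2))) * gm (ι := ι) Set.univ :=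
        add_le_add (gm_tail_one ρ hM hρ hs) (gm_tail_one (-ρ) hM hρ' hs)
    _ = _ := by ring


lemma gauss_pack {A J : Type} [Fintype A] [Fintype J] [Nonempty J]
    (α : A → ι → ℝ) (ρ : J → ι → ℝ) {M₁ M₂ δ : ℝ}
    (h1 : 0 < M₁) (h2 : 0 < M₂) (hδ : 0 < δ)
    (hα : ∀ p, sq (α p) ≤ M₁^2) (hρ : ∀ j, sq (ρ j) ≤ M₂^2)
    (hsep : ∀ p q : A, p ≠ q → ∃ j, δ < |ip (α p - α q) (ρ j)|) :
    (Fintype.card A : ℝ) ≤ 2 * (4 * (Fintype.card J : ℝ)) ^ (4*M₁^2*M₂^2/δ^2 : ℝ) := by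
  classical
  set Nr : ℝ := (Fintype.card J : ℝ) with hNr
  have hN1 : 1 ≤ Nr := by
    rw [hNr]; exact_mod_cast Fintype.card_pos
  have h4N : (1:ℝ) < 4 * Nr := by linarith
  have hlog : 0 < Real.log (4 * Nr) := Real.log_pos h4N
  set s : ℝ := M₂ * Real.sqrt (2 * Real.log (4*Nr)) with hs_def
  have hs : 0 < s := by
    apply mul_pos h2
    exact Real.sqrt_pos.mpr (by linarith)
  have hs2 : s^2 = M₂^2 * (2 * Real.log (4*Nr)) := by
    rw [hs_def, mul_pow, Real.sq_sqrt (by linarith)]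
  set lam : ℝ := 2*s/δ with hlam_def
  have hlam : 0 < lam := by positivity
  set C : Set (ι → ℝ) := {x | ∀ j, |ip x (ρ j)| ≤ s} with hC_def
  have hCmeas : MeasurableSet C := by
    have : C = ⋂ j, {x : ι → ℝ | |ip x (ρ j)| ≤ s} := by
      ext x; simp [hC_def, Set.mem_iInter]
    rw [this]
    exact MeasurableSet.iInter fun j => measurableSet_le ((meas_ip (ρ j)).abs) measurable_const
  have hCsym : ∀ x ∈ C, -x ∈ C := by
    intro x hx j
    have : ip (-x) (ρ j) = - ip x (ρ j) := by
      rw [show -x = (-1 : ℝ) • x by simp, ip_smul_left]; ring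
    rw [this, abs_neg]
    exact hx j
  set Z : ℝ≥0∞ := gm (ι := ι) Set.univ with hZ
  have hZtop : Z ≠ ⊤ := gm_univ_lt_top.ne
  have hZ0 : Z ≠ 0 := gm_univ_pos.ne'
  -- complement bound
  have hCc : gm Cᶜ ≤ Z / 2 := by
    have hsub : Cᶜ ⊆ ⋃ j, {x : ι → ℝ | s ≤ |ip x (ρ j)|} := by
      intro x hx
      simp only [hC_def, Set.mem_compl_iff, Set.mem_setOf_eq, not_forall, not_le] at hx
      obtain ⟨j, hj⟩ := hx
      exact Set.mem_iUnion.mpr ⟨j, le_of_lt hj⟩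
    have hexp : Real.exp (-(s^2)/(2*M₂^2)) = (4*Nr)⁻¹ := by
      rw [hs2, show -(M₂^2 * (2 * Real.log (4*Nr)))/(2*M₂^2) = - Real.log (4*Nr) by
        field_simp]
      rw [Real.exp_neg, Real.exp_log (by linarith)]
    calc gm Cᶜ ≤ ∑ j : J, gm {x : ι → ℝ | s ≤ |ip x (ρ j)|} :=
          le_trans (measure_mono hsub) (measure_iUnion_fintype_le _ _)
      _ ≤ ∑ _j : J, 2 * ENNReal.ofReal ((4*Nr)⁻¹) * Z := by
          apply Finset.sum_le_sum
          intro j _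
          have := gm_tail_abs (ρ j) h2 (hρ j) hs
          rwa [hexp] at this
      _ = (Fintype.card J : ℝ≥0∞) * (2 * ENNReal.ofReal ((4*Nr)⁻¹) * Z) := by
          rw [Finset.sum_const, Finset.card_univ, nsmul_eq_mul]
      _ = ((Fintype.card J : ℝ≥0∞) * (2 * ENNReal.ofReal ((4*Nr)⁻¹))) * Z := by ring
      _ = ENNReal.ofReal (2⁻¹) * Z := by
          congr 1
          rw [show ((Fintype.card J : ℝ≥0∞)) = ENNReal.ofReal Nr by
            rw [hNr]; simp [ENNReal.ofReal_natCast]]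
          rw [show (2 : ℝ≥0∞) = ENNReal.ofReal 2 by norm_num]
          rw [← ENNReal.ofReal_mul (by norm_num), ← ENNReal.ofReal_mul (by positivity)]
          congr 1
          field_simp
          ring
      _ = Z / 2 := by
          rw [ENNReal.ofReal_inv_of_pos (by norm_num), ENNReal.div_eq_inv_mul]
          norm_num
  have hCge : Z / 2 ≤ gm C := by
    have h1' : gm C = Z - gm Cᶜ := by
      have h := measure_compl (μ := gm) hCmeas.compl
        (lt_of_le_of_lt (measure_mono (Set.subset_univ _)) gm_univ_lt_top).ne
      rw [compl_compl] at h
      rw [hZ]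
      exact h
    rw [h1']
    calc Z / 2 = Z - Z/2 := (ENNReal.sub_half hZtop).symm
      _ ≤ Z - gm Cᶜ := tsub_le_tsub_left hCc Z
  -- translated sets
  set B : A → Set (ι → ℝ) := fun p => {x | x - lam • α p ∈ C} with hB
  have hBmeas : ∀ p, MeasurableSet (B p) := by
    intro p
    exact hCmeas.preimage (measurable_id.sub_const _)
  have hBlow : ∀ p, ENNReal.ofReal (Real.exp (-(lam^2*M₁^2)/2)) * (Z/2) ≤ gm (B p) := by
    intro p
    calc ENNReal.ofReal (Real.exp (-(lam^2*M₁^2)/2)) * (Z/2)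
        ≤ ENNReal.ofReal (Real.exp (-sq (lam • α p) / 2)) * gm C := by
          apply mul_le_mul'
          · apply ENNReal.ofReal_le_ofReal
            apply Real.exp_le_exp.mpr
            have : sq (lam • α p) ≤ lam^2 * M₁^2 := by
              rw [sq_smul]
              have := hα p
              nlinarith [_root_.sq_nonneg lam]
            linarith
          · exact hCge
      _ ≤ gm (B p) := gm_translate hCmeas hCsym _
  -- disjointness
  have hdisj : Set.PairwiseDisjoint (Finset.univ : Finset A) B := by
    intro p _ q _ hpq
    rw [Function.onFun, Set.disjoint_left]
    intro z hzp hzq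
    obtain ⟨j, hj⟩ := hsep p q hpq
    have hc1 : z - lam • α p ∈ C := hzp
    have hc2 : z - lam • α q ∈ C := hzq
    have e1 : |ip (z - lam • α p) (ρ j)| ≤ s := hc1 j
    have e2 : |ip (z - lam • α q) (ρ j)| ≤ s := hc2 j
    have hv : (z - lam • α q) - (z - lam • α p) = lam • (α p - α q) := by
      ext i
      simp only [Pi.sub_apply, Pi.smul_apply, smul_eq_mul]
      ring
    have key : ip (z - lam • α q) (ρ j) - ip (z - lam • α p) (ρ j)
        = lam * ip (α p - α q) (ρ j) := by
      rw [← ip_sub_left, hv, ip_smul_left]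
    have habs : lam * |ip (α p - α q) (ρ j)| ≤ 2 * s := by
      rw [← abs_of_pos hlam, ← abs_mul, ← key]
      calc |ip (z - lam • α q) (ρ j) - ip (z - lam • α p) (ρ j)|
          ≤ |ip (z - lam • α q) (ρ j)| + |ip (z - lam • α p) (ρ j)| := abs_sub _ _
        _ ≤ 2 * s := by linarith
    have : lam * δ < lam * |ip (α p - α q) (ρ j)| := by
      exact (mul_lt_mul_iff_right₀ hlam).mpr hj
    have hld : lam * δ = 2 * s := by rw [hlam_def]; field_simp
    linarith
  -- sum bound
  have hsum : (Fintype.card A : ℝ≥0∞) * (ENNReal.ofReal (Real.exp (-(lam^2*M₁^2)/2)) * (Z/2)) ≤ Z := by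
    calc (Fintype.card A : ℝ≥0∞) * (ENNReal.ofReal (Real.exp (-(lam^2*M₁^2)/2)) * (Z/2))
        = ∑ _p : A, (ENNReal.ofReal (Real.exp (-(lam^2*M₁^2)/2)) * (Z/2)) := by
          rw [Finset.sum_const, Finset.card_univ, nsmul_eq_mul]
      _ ≤ ∑ p : A, gm (B p) := Finset.sum_le_sum fun p _ => hBlow p
      _ = gm (⋃ p ∈ (Finset.univ : Finset A), B p) :=
          (measure_biUnion_finset hdisj fun p _ => hBmeas p).symm
      _ ≤ Z := by rw [hZ]; exact measure_mono (Set.subset_univ _)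
  -- convert to reals
  set r : ℝ := Real.exp (-(lam^2*M₁^2)/2) with hr
  have hrpos : 0 < r := Real.exp_pos _
  set z : ℝ := Z.toReal with hz
  have hzpos : 0 < z := ENNReal.toReal_pos hZ0 hZtop
  have hreal : (Fintype.card A : ℝ) * (r * (z/2)) ≤ z := by
    have := ENNReal.toReal_mono hZtop hsum
    rw [ENNReal.toReal_mul, ENNReal.toReal_mul, ENNReal.toReal_ofReal hrpos.le,
      ENNReal.toReal_div] at this
    simpa using this
  have hcard : (Fintype.card A : ℝ) ≤ 2 / r := by
    rw [le_div_iff₀ hrpos]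
    set n : ℝ := (Fintype.card A : ℝ) with hn
    have h3 : (n * r - 2) * (z/2) ≤ 0 := by nlinarith [hreal]
    have h4 : n * r - 2 ≤ 0 := by
      by_contra hcon
      push_neg at hcon
      nlinarith [hzpos]
    linarith
  calc (Fintype.card A : ℝ) ≤ 2 / r := hcard
    _ = 2 * (4*Nr) ^ (4*M₁^2*M₂^2/δ^2 : ℝ) := by
        rw [hr, div_eq_mul_inv, ← Real.exp_neg]
        congr 1
        rw [Real.rpow_def_of_pos (by linarith)]
        congr 1
        rw [hlam_def]
        linear_combination (2*M₁^2/δ^2) * hs2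

end GaussCore

namespace OI

variable {X : Type*} (μ : PMF X)

lemma summable_pmf : Summable (fun x => (μ x).toReal) :=
  ENNReal.summable_toReal (by rw [μ.tsum_coe]; exact ENNReal.one_ne_top)

lemma tsum_pmf : ∑' x, (μ x).toReal = 1 := by
  rw [← ENNReal.tsum_toReal_eq (fun a => μ.apply_ne_top a), μ.tsum_coe, ENNReal.toReal_one]

lemma summable_mul_of_bound (f : X → ℝ) (B : ℝ) (hB : ∀ x, |f x| ≤ B) :
    Summable fun x => (μ x).toReal * f x := by
  apply Summable.of_abs
  have habs : ∀ x, |(μ x).toReal * f x| ≤ (μ x).toReal * B := by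
    intro x
    rw [abs_mul, abs_of_nonneg ENNReal.toReal_nonneg]
    exact mul_le_mul_of_nonneg_left (hB x) ENNReal.toReal_nonneg
  exact Summable.of_nonneg_of_le (fun x => abs_nonneg _) habs ((summable_pmf μ).mul_right B)

lemma abs_pexp_le (f : X → ℝ) (B : ℝ) (hB : ∀ x, |f x| ≤ B) (hB0 : 0 ≤ B) :
    |pexp μ f| ≤ B := by
  unfold pexp
  have hsum := summable_mul_of_bound μ f B hB
  calc |∑' x, (μ x).toReal * f x| ≤ ∑' x, |(μ x).toReal * f x| := by
        have h := norm_tsum_le_tsum_norm (f := fun x => (μ x).toReal * f x)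
          (by simpa only [Real.norm_eq_abs] using hsum.abs)
        simpa only [Real.norm_eq_abs] using h
    _ ≤ ∑' x, (μ x).toReal * B := by
        apply Summable.tsum_le_tsum _ hsum.abs ((summable_pmf μ).mul_right B)
        intro x
        rw [abs_mul, abs_of_nonneg ENNReal.toReal_nonneg]
        exact mul_le_mul_of_nonneg_left (hB x) ENNReal.toReal_nonneg
    _ = B := by rw [tsum_mul_right, tsum_pmf, one_mul]

lemma pexp_nonneg (f : X → ℝ) (hf : ∀ x, 0 ≤ f x) : 0 ≤ pexp μ f :=
  tsum_nonneg fun x => mul_nonneg ENNReal.toReal_nonneg (hf x)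

lemma abs_inn_le (f g : X → ℝ) (Bf Bg : ℝ) (hf : ∀ x, |f x| ≤ Bf) (hg : ∀ x, |g x| ≤ Bg)
    (h0f : 0 ≤ Bf) (h0g : 0 ≤ Bg) : |inn μ f g| ≤ Bf * Bg := by
  apply abs_pexp_le μ _ (Bf * Bg) _ (by positivity)
  intro x
  rw [abs_mul]
  exact mul_le_mul (hf x) (hg x) (abs_nonneg _) h0f

lemma inn_comm (f g : X → ℝ) : inn μ f g = inn μ g f := by
  unfold inn; congr 1; ext x; ring

lemma inn_sub_left (f g h : X → ℝ) (Bf Bg Bh : ℝ)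
    (hf : ∀ x, |f x| ≤ Bf) (hg : ∀ x, |g x| ≤ Bg) (hh : ∀ x, |h x| ≤ Bh)
    (h0h : 0 ≤ Bh) :
    inn μ (f - g) h = inn μ f h - inn μ g h := by
  unfold inn pexp
  rw [← Summable.tsum_sub (summable_mul_of_bound μ _ (Bf * Bh)
      (fun x => by rw [abs_mul]; exact mul_le_mul (hf x) (hh x) (abs_nonneg _) ((abs_nonneg _).trans (hf x))))
    (summable_mul_of_bound μ _ (Bg * Bh)
      (fun x => by rw [abs_mul]; exact mul_le_mul (hg x) (hh x) (abs_nonneg _) ((abs_nonneg _).trans (hg x))))]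
  congr 1
  ext x
  simp [Pi.sub_apply]
  ring

-- dnorm lemmas
lemma bddAbove_dnormSet (f : X → ℝ) (F : Set (X → ℝ)) (Bf BF : ℝ)
    (hf : ∀ x, |f x| ≤ Bf) (hF : ∀ g ∈ F, ∀ x, |g x| ≤ BF) (h0f : 0 ≤ Bf) (h0F : 0 ≤ BF) :
    BddAbove ((fun g => |inn μ f g|) '' F) := by
  refine ⟨Bf * BF, ?_⟩
  rintro y ⟨g, hg, rfl⟩
  exact abs_inn_le μ f g Bf BF hf (hF g hg) h0f h0F

lemma inn_le_dnorm {f g : X → ℝ} {F : Set (X → ℝ)} (hg : g ∈ F) (Bf BF : ℝ)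
    (hf : ∀ x, |f x| ≤ Bf) (hF : ∀ g' ∈ F, ∀ x, |g' x| ≤ BF) (h0f : 0 ≤ Bf) (h0F : 0 ≤ BF) :
    |inn μ f g| ≤ dnorm μ F f :=
  le_csSup (bddAbove_dnormSet μ f F Bf BF hf hF h0f h0F) ⟨g, hg, rfl⟩

lemma dnorm_le {f : X → ℝ} {F : Set (X → ℝ)} (hne : F.Nonempty) {B : ℝ}
    (h : ∀ g ∈ F, |inn μ f g| ≤ B) : dnorm μ F f ≤ B := by
  apply Real.sSup_le _ ?_
  · rintro y ⟨g, hg, rfl⟩; exact h g hg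
  · obtain ⟨g, hg⟩ := hne
    exact le_trans (abs_nonneg _) (h g hg)

lemma exists_witness_of_lt_dnorm {f : X → ℝ} {F : Set (X → ℝ)} (hne : F.Nonempty) {ε : ℝ}
    (hε : 0 ≤ ε) (h : ε < dnorm μ F f) : ∃ g ∈ F, ε < |inn μ f g| := by
  by_contra hcon
  push_neg at hcon
  exact absurd (dnorm_le μ hne hcon) (not_le.mpr h)

-- Gram factorization
lemma inn_sum_right (u : X → ℝ) (Bu : ℝ) (hu : ∀ x, |u x| ≤ Bu)
    (W : Finset (X → ℝ)) (K : ℝ) (hK : ∀ v ∈ W, ∀ x, |v x| ≤ K) (c : {v // v ∈ W} → ℝ) :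
    inn μ u (fun t => ∑ v : {v // v ∈ W}, c v * (v : X → ℝ) t)
      = ∑ v : {v // v ∈ W}, c v * inn μ u (v : X → ℝ) := by
  classical
  unfold inn pexp
  have step1 : ∀ t : X, (μ t).toReal * (u t * ∑ v : {v // v ∈ W}, c v * (v : X → ℝ) t)
      = ∑ v : {v // v ∈ W}, (μ t).toReal * (u t * (c v * (v : X → ℝ) t)) := by
    intro t
    rw [Finset.mul_sum, Finset.mul_sum]
  calc (∑' t, (μ t).toReal * (u t * ∑ v : {v // v ∈ W}, c v * (v : X → ℝ) t))
      = ∑' t, ∑ v : {v // v ∈ W}, (μ t).toReal * (u t * (c v * (v : X → ℝ) t)) :=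
        tsum_congr step1
    _ = ∑ v : {v // v ∈ W}, ∑' t, (μ t).toReal * (u t * (c v * (v : X → ℝ) t)) := by
        apply Summable.tsum_finsetSum
        intro v _
        apply summable_mul_of_bound μ _ (Bu * (|c v| * K))
        intro x
        rw [abs_mul, abs_mul]
        apply mul_le_mul (hu x) _ (by positivity) ((abs_nonneg _).trans (hu x))
        apply mul_le_mul_of_nonneg_left (hK v v.2 x) (abs_nonneg _)
    _ = ∑ v : {v // v ∈ W}, c v * ∑' t, (μ t).toReal * (u t * (v : X → ℝ) t) := by
        apply Finset.sum_congr rfl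
        intro v _
        rw [← tsum_mul_left]
        refine tsum_congr fun t => by ring

lemma gram_factor (W : Finset (X → ℝ)) (K : ℝ) (hK : ∀ u ∈ W, ∀ x, |u x| ≤ K) :
    ∃ vec : {u // u ∈ W} → ({u // u ∈ W} → ℝ),
      ∀ u v : {u // u ∈ W}, (∑ w : {u // u ∈ W}, vec u w * vec v w) = inn μ u.1 v.1 := by
  classical
  set A : Matrix {u // u ∈ W} {u // u ∈ W} ℝ :=
    Matrix.of (fun u v : {u // u ∈ W} => inn μ u.1 v.1) with hA
  have hherm : A.IsHermitian := by
    ext u v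
    simp only [hA, Matrix.conjTranspose_apply, Matrix.of_apply, star_trivial]
    exact inn_comm μ _ _
  have hpsd : A.PosSemidef := by
    refine Matrix.PosSemidef.of_dotProduct_mulVec_nonneg hherm fun c => ?_
    set Fc : X → ℝ := fun t => ∑ v : {v // v ∈ W}, c v * (v : X → ℝ) t with hFc
    have hFcB : ∀ t, |Fc t| ≤ ∑ v : {v // v ∈ W}, |c v| * K := by
      intro t
      rw [hFc]
      calc |∑ v : {v // v ∈ W}, c v * (v : X → ℝ) t|
          ≤ ∑ v : {v // v ∈ W}, |c v * (v : X → ℝ) t| := Finset.abs_sum_le_sum_abs _ _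
        _ ≤ ∑ v : {v // v ∈ W}, |c v| * K := by
            apply Finset.sum_le_sum
            intro v _
            rw [abs_mul]
            exact mul_le_mul_of_nonneg_left (hK v v.2 t) (abs_nonneg _)
    have hrow : ∀ u : {u // u ∈ W}, A.mulVec c u = inn μ u.1 Fc := by
      intro u
      have h1 : A.mulVec c u = ∑ v : {v // v ∈ W}, c v * inn μ u.1 v.1 := by
        simp only [Matrix.mulVec, dotProduct, hA, Matrix.of_apply]
        exact Finset.sum_congr rfl fun v _ => by ring
      rw [h1, ← inn_sum_right μ u.1 K (hK u u.2) W K hK c]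
    have hquad : dotProduct (star c) (A.mulVec c) = inn μ Fc Fc := by
      calc dotProduct (star c) (A.mulVec c)
          = ∑ u : {u // u ∈ W}, c u * inn μ u.1 Fc := by
            simp only [dotProduct, Pi.star_apply, star_trivial]
            exact Finset.sum_congr rfl fun u _ => by rw [hrow]
        _ = ∑ u : {u // u ∈ W}, c u * inn μ Fc u.1 :=
            Finset.sum_congr rfl fun u _ => by rw [inn_comm]
        _ = inn μ Fc Fc :=
            (inn_sum_right μ Fc (∑ v : {v // v ∈ W}, |c v| * K) hFcB W K hK c).symm
    show 0 ≤ dotProduct (star c) (A.mulVec c)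
    rw [hquad]
    exact pexp_nonneg μ _ fun t => mul_self_nonneg _
  obtain ⟨B, hB⟩ : ∃ B : Matrix {u // u ∈ W} {u // u ∈ W} ℝ, A = star B * B := by
    open scoped MatrixOrder in exact CStarAlgebra.nonneg_iff_eq_star_mul_self.mp hpsd.nonneg
  rw [Matrix.star_eq_conjTranspose] at hB
  refine ⟨fun u w => B w u, ?_⟩
  intro u v
  have : A u v = inn μ u.1 v.1 := rfl
  rw [← this, hB, Matrix.mul_apply]
  exact Finset.sum_congr rfl fun w _ => by
    rw [Matrix.conjTranspose_apply, star_trivial]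


variable {X : Type*}

lemma dnorm_sub_comm (μ : PMF X) (F : Set (X → ℝ)) (f g : X → ℝ) :
    dnorm μ F (f - g) = dnorm μ F (g - f) := by
  unfold dnorm
  congr 1
  ext y
  constructor <;> rintro ⟨h, hh, rfl⟩ <;> refine ⟨h, hh, ?_⟩ <;>
  · show |inn μ _ h| = |inn μ _ h|
    rw [show inn μ (g - f) h = - inn μ (f - g) h from ?_, abs_neg]
    unfold inn pexp
    rw [← tsum_neg]
    exact tsum_congr fun t => by simp [Pi.sub_apply]; ring

lemma dnorm_self_sub (μ : PMF X) (F : Set (X → ℝ)) (hne : F.Nonempty) (f : X → ℝ) {ε : ℝ}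
    (hε : 0 ≤ ε) : dnorm μ F (f - f) ≤ ε := by
  apply dnorm_le μ hne
  intro g _
  have : inn μ (f - f) g = 0 := by
    unfold inn pexp
    convert tsum_zero with t
    simp [Pi.sub_apply]
  rw [this, abs_zero]
  exact hε

lemma covN_le_encard {μ : PMF X} {F G : Set (X → ℝ)} {ε : ℝ} {C : Set (X → ℝ)}
    (h : IsCover μ F G ε C) : covN μ F G ε ≤ C.encard :=
  le_trans (iInf_le _ C) (iInf_le _ h)

lemma one_le_covN {μ : PMF X} {F G : Set (X → ℝ)} {ε : ℝ} (hG : G.Nonempty) :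
    1 ≤ covN μ F G ε := by
  apply le_iInf
  intro C
  apply le_iInf
  intro hC
  rw [Set.one_le_encard_iff_nonempty]
  obtain ⟨g, hg⟩ := hG
  obtain ⟨c, hc, -⟩ := hC.2 g hg
  exact ⟨c, hc⟩

lemma exists_finset_cover {μ : PMF X} {F G : Set (X → ℝ)} {ε : ℝ}
    (h : covN μ F G ε ≠ ⊤) :
    ∃ C : Finset (X → ℝ), IsCover μ F G ε ↑C ∧ (C.card : ℕ∞) = covN μ F G ε := by
  classical
  set n := (covN μ F G ε).toNat with hn
  have hcov : covN μ F G ε = (n : ℕ∞) := (ENat.coe_toNat h).symm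
  have hlt : covN μ F G ε < (n : ℕ∞) + 1 := by
    rw [hcov]
    have : ((n:ℕ∞) + 1) = ((n+1 : ℕ) : ℕ∞) := by push_cast; ring
    rw [this]
    exact_mod_cast Nat.lt_succ_self n
  rw [covN, iInf_lt_iff] at hlt
  obtain ⟨C, hlt⟩ := hlt
  rw [iInf_lt_iff] at hlt
  obtain ⟨hC, hlt⟩ := hlt
  have hle : covN μ F G ε ≤ C.encard := covN_le_encard hC
  have hCn : C.encard ≤ (n : ℕ∞) := by
    have := hlt
    exact Order.le_of_lt_add_one this
  have hCfin : C.Finite := by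
    rw [← Set.encard_ne_top_iff]
    intro htop
    rw [htop] at hCn
    exact (lt_irrefl _ (lt_of_le_of_lt hCn (by exact_mod_cast lt_of_le_of_ne le_top (fun h' => ENat.top_ne_coe n h'.symm) ))).elim
  refine ⟨hCfin.toFinset, ?_, ?_⟩
  · rwa [Set.Finite.coe_toFinset]
  · have henc : C.encard = (hCfin.toFinset.card : ℕ∞) := by
      rw [Set.Finite.encard_eq_coe_toFinset_card]
    have heq : C.encard = covN μ F G ε := le_antisymm (hCn.trans_eq hcov.symm) hle
    rw [← henc, heq]


end OI

/-- a variant of metric entropy duality: there is an absolute constant `c ≥ 1`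
such that `log N_{μ,F₂}(F₁,ε) ≤ c (M₁M₂/ε)² (1 + log N_{μ,F₁}(F₂,ε/8))` for all nonempty
`F₁ ⊆ [−M₁,M₁]^X` and `F₂ ⊆ [−M₂,M₂]^X`. -/
theorem statement_5 :
    ∃ c : ℝ, 1 ≤ c ∧
      ∀ (X : Type) (_ : Nonempty X) (μ : PMF X) (M₁ M₂ : ℝ), 0 < M₁ → 0 < M₂ →
        ∀ F₁ F₂ : Set (X → ℝ), F₁.Nonempty → F₂.Nonempty →
          (∀ f ∈ F₁, ∀ x, |f x| ≤ M₁) → (∀ f ∈ F₂, ∀ x, |f x| ≤ M₂) →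
          ∀ ε : ℝ, 0 < ε →
            covN μ F₁ F₂ (ε / 8) ≠ ⊤ →
              covN μ F₂ F₁ ε ≠ ⊤ ∧
                elog2 (covN μ F₂ F₁ ε) ≤
                  c * (M₁ * M₂ / ε) ^ 2 * (1 + elog2 (covN μ F₁ F₂ (ε / 8))) := by
  classical
  refine ⟨20, by norm_num, ?_⟩
  intro X _ μ M₁ M₂ hM₁ hM₂ F₁ F₂ hF₁ hF₂ hB₁ hB₂ ε hε hfin
  obtain ⟨Gf, hGcov, hGcard⟩ := exists_finset_cover hfin
  have hGsub : ↑Gf ⊆ F₂ := hGcov.1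
  have hGne : Gf.Nonempty := by
    obtain ⟨g₀, hg₀⟩ := hF₂
    obtain ⟨c, hc, -⟩ := hGcov.2 g₀ hg₀
    exact ⟨c, by exact_mod_cast hc⟩
  set N : ℕ := Gf.card with hNdef
  have hN1 : 1 ≤ N := Finset.card_pos.mpr hGne
  have hLN : elog2 (covN μ F₁ F₂ (ε/8)) = Real.logb 2 (N:ℝ) := by
    rw [elog2, ← hGcard]
    simp
  have hL0 : 0 ≤ Real.logb 2 (N:ℝ) := Real.logb_nonneg (by norm_num) (by exact_mod_cast hN1)
  have hRHS0 : 0 ≤ 20 * (M₁ * M₂ / ε) ^ 2 * (1 + elog2 (covN μ F₁ F₂ (ε / 8))) := by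
    rw [hLN]
    have : (0:ℝ) ≤ (M₁ * M₂ / ε)^2 := sq_nonneg _
    nlinarith
  by_cases hcase : ε < 2*(M₁*M₂)
  · -- main case
    have packBound : ∀ S : Finset (X → ℝ), ↑S ⊆ F₁ →
        (∀ p ∈ S, ∀ q ∈ S, p ≠ q → ε < dnorm μ F₂ (p - q)) →
        (S.card : ℝ) ≤ 2 * (4 * (N:ℝ)) ^ (4*M₁^2*M₂^2/(3*ε/4)^2 : ℝ) := by
      intro S hSsub hSsep
      set W : Finset (X → ℝ) := S ∪ Gf with hW
      have hWb : ∀ u ∈ W, ∀ x, |u x| ≤ max M₁ M₂ := by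
        intro u hu x
        rcases Finset.mem_union.mp hu with h | h
        · exact le_trans (hB₁ u (hSsub h) x) (le_max_left _ _)
        · exact le_trans (hB₂ u (hGsub h) x) (le_max_right _ _)
      obtain ⟨vec, hvec⟩ := gram_factor μ W (max M₁ M₂) hWb
      have hmemS : ∀ p : {p // p ∈ S}, p.1 ∈ W := fun p => Finset.mem_union_left _ p.2
      have hmemG : ∀ j : {j // j ∈ Gf}, j.1 ∈ W := fun j => Finset.mem_union_right _ j.2
      set α : {p // p ∈ S} → ({u // u ∈ W} → ℝ) := fun p => vec ⟨p.1, hmemS p⟩ with hα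
      set ρ : {j // j ∈ Gf} → ({u // u ∈ W} → ℝ) := fun j => vec ⟨j.1, hmemG j⟩ with hρ
      have hip : ∀ (a b : {u // u ∈ W}), GaussCore.ip (vec a) (vec b) = inn μ a.1 b.1 := by
        intro a b
        rw [GaussCore.ip]
        exact hvec a b
      have hsq : ∀ (a : {u // u ∈ W}) (M : ℝ), 0 ≤ M → (∀ x, |a.1 x| ≤ M) →
          GaussCore.sq (vec a) ≤ M^2 := by
        intro a M hM hb
        have h1 : GaussCore.sq (vec a) = GaussCore.ip (vec a) (vec a) := by
          rw [GaussCore.sq, GaussCore.ip]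
          exact Finset.sum_congr rfl fun w _ => pow_two _
        rw [h1, hip]
        refine le_trans (le_abs_self _) (abs_pexp_le μ _ (M^2) ?_ (by positivity))
        intro x
        rw [abs_mul, pow_two]
        exact mul_le_mul (hb x) (hb x) (abs_nonneg _) hM
      have hαB : ∀ p, GaussCore.sq (α p) ≤ M₁^2 := by
        intro p
        exact hsq ⟨p.1, hmemS p⟩ M₁ hM₁.le (hB₁ p.1 (hSsub p.2))
      have hρB : ∀ j, GaussCore.sq (ρ j) ≤ M₂^2 := by
        intro j
        exact hsq ⟨j.1, hmemG j⟩ M₂ hM₂.le (hB₂ j.1 (hGsub j.2))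
      have hJne : Nonempty {j // j ∈ Gf} := by
        obtain ⟨g, hg⟩ := hGne
        exact ⟨⟨g, hg⟩⟩
      have hsep' : ∀ p q : {p // p ∈ S}, p ≠ q →
          ∃ j : {j // j ∈ Gf}, 3*ε/4 < |GaussCore.ip (α p - α q) (ρ j)| := by
        intro p q hpq
        have hne' : (p.1 : X → ℝ) ≠ q.1 := fun h => hpq (Subtype.ext h)
        have hdn : ε < dnorm μ F₂ (p.1 - q.1) := hSsep p.1 p.2 q.1 q.2 hne'
        obtain ⟨g, hgF, hgw⟩ := exists_witness_of_lt_dnorm μ hF₂ hε.le hdn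
        obtain ⟨cg, hcgC, hcgnorm⟩ := hGcov.2 g hgF
        have hcgGf : cg ∈ Gf := by exact_mod_cast hcgC
        have hpB := hB₁ p.1 (hSsub p.2)
        have hqB := hB₁ q.1 (hSsub q.2)
        have hgB := hB₂ g hgF
        have hcgB := hB₂ cg (hGsub hcgGf)
        have e1 : inn μ (p.1 - q.1) g = inn μ p.1 g - inn μ q.1 g :=
          inn_sub_left μ _ _ _ M₁ M₁ M₂ hpB hqB hgB hM₂.le
        have e2 : inn μ (p.1 - q.1) cg = inn μ p.1 cg - inn μ q.1 cg :=
          inn_sub_left μ _ _ _ M₁ M₁ M₂ hpB hqB hcgB hM₂.le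
        have hgcB : ∀ x, |(g - cg) x| ≤ 2*M₂ := by
          intro x
          simp only [Pi.sub_apply]
          calc |g x - cg x| ≤ |g x| + |cg x| := abs_sub _ _
            _ ≤ 2*M₂ := by linarith [hgB x, hcgB x]
        have key8 : ∀ (r : X → ℝ), r ∈ F₁ → (∀ x, |r x| ≤ M₁) →
            |inn μ r g - inn μ r cg| ≤ ε/8 := by
          intro r hrF hrB
          have h1 : inn μ (g - cg) r = inn μ g r - inn μ cg r :=
            inn_sub_left μ _ _ _ M₂ M₂ M₁ hgB hcgB hrB hM₁.le
          have h2 : |inn μ (g - cg) r| ≤ dnorm μ F₁ (g - cg) :=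
            inn_le_dnorm μ hrF (2*M₂) M₁ hgcB hB₁ (by linarith) hM₁.le
          rw [h1] at h2
          rw [inn_comm μ r g, inn_comm μ r cg]
          linarith [hcgnorm]
        have hp8 := key8 p.1 (hSsub p.2) hpB
        have hq8 := key8 q.1 (hSsub q.2) hqB
        refine ⟨⟨cg, hcgGf⟩, ?_⟩
        have hipval : GaussCore.ip (α p - α q) (ρ ⟨cg, hcgGf⟩) = inn μ p.1 cg - inn μ q.1 cg := by
          rw [GaussCore.ip_sub_left, hα, hρ]
          simp only
          rw [hip, hip]
        rw [hipval]
        rw [e1] at hgw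
        set a := inn μ p.1 g
        set b := inn μ q.1 g
        set a' := inn μ p.1 cg
        set b' := inn μ q.1 cg
        have tri : |a - b| ≤ |a' - b'| + (|a - a'| + |b - b'|) := by
          have hre : a - b = (a' - b') + ((a - a') - (b - b')) := by ring
          rw [hre]
          calc |(a' - b') + ((a - a') - (b - b'))|
              ≤ |a' - b'| + |(a - a') - (b - b')| := abs_add_le _ _
            _ ≤ |a' - b'| + (|a - a'| + |b - b'|) := by linarith [abs_sub (a - a') (b - b')]
        linarith [hp8, hq8, hgw, tri]
      have hGP := GaussCore.gauss_pack α ρ hM₁ hM₂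
        (show (0:ℝ) < 3*ε/4 by linarith) hαB hρB hsep'
      rw [Fintype.card_coe, Fintype.card_coe] at hGP
      exact hGP
    -- maximal packing
    set E : ℝ := (4*M₁^2*M₂^2/(3*ε/4)^2 : ℝ) with hE
    set Breal : ℝ := 2 * (4 * (N:ℝ)) ^ E with hBreal
    have hE0 : 0 ≤ E := by positivity
    have h4N1 : (1:ℝ) ≤ 4 * (N:ℝ) := by
      have : (1:ℝ) ≤ (N:ℝ) := by exact_mod_cast hN1
      linarith
    have hBreal1 : 1 ≤ Breal := by
      have h1 : (1:ℝ) ≤ (4 * (N:ℝ)) ^ E := Real.one_le_rpow h4N1 hE0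
      rw [hBreal]
      linarith
    set KB : ℕ := ⌊Breal⌋₊ with hKB
    set P : ℕ → Prop := fun k => ∃ S : Finset (X → ℝ), (↑S ⊆ F₁ ∧
      (∀ p ∈ S, ∀ q ∈ S, p ≠ q → ε < dnorm μ F₂ (p - q))) ∧ S.card = k with hP
    have hP0 : P 0 := ⟨∅, ⟨by simp, by simp⟩, rfl⟩
    have hPle : ∀ k, P k → k ≤ KB := by
      rintro k ⟨S, ⟨h1, h2⟩, rfl⟩
      exact Nat.le_floor (packBound S h1 h2)
    set m := Nat.findGreatest P KB with hm
    have hPm : P m := Nat.findGreatest_spec (Nat.zero_le _) hP0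
    obtain ⟨S₀, ⟨hS₀sub, hS₀sep⟩, hS₀card⟩ := hPm
    have hS₀cov : ∀ f ∈ F₁, ∃ s ∈ (↑S₀ : Set (X → ℝ)), dnorm μ F₂ (f - s) ≤ ε := by
      intro f hf
      by_contra hcon
      push_neg at hcon
      simp only [Finset.mem_coe] at hcon
      have hfnot : f ∉ S₀ := fun hfS =>
        absurd (dnorm_self_sub μ F₂ hF₂ f hε.le) (not_le.mpr (hcon f hfS))
      have hpack' : P (m + 1) := by
        refine ⟨insert f S₀, ⟨?_, ?_⟩, ?_⟩
        · intro x hx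
          rcases Finset.mem_insert.mp (by exact_mod_cast hx) with rfl | hxS
          · exact hf
          · exact hS₀sub hxS
        · intro p hp q hq hpq
          rcases Finset.mem_insert.mp hp with rfl | hp' <;>
            rcases Finset.mem_insert.mp hq with rfl | hq'
          · exact absurd rfl hpq
          · exact hcon q hq'
          · rw [dnorm_sub_comm]
            exact hcon p hp'
          · exact hS₀sep p hp' q hq' hpq
        · rw [Finset.card_insert_of_notMem hfnot, hS₀card]
      have := Nat.le_findGreatest (hPle _ hpack') hpack'
      omega
    have hcover : IsCover μ F₂ F₁ ε ↑S₀ := ⟨fun x hx => hS₀sub (by exact_mod_cast hx), hS₀cov⟩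
    have hcovle : covN μ F₂ F₁ ε ≤ (S₀.card : ℕ∞) := by
      have h := covN_le_encard hcover
      rwa [Set.encard_coe_eq_coe_finsetCard] at h
    have hnetop : covN μ F₂ F₁ ε ≠ ⊤ := ne_top_of_le_ne_top (ENat.coe_ne_top _) hcovle
    refine ⟨hnetop, ?_⟩
    have htoNat : ((covN μ F₂ F₁ ε).toNat : ℝ) ≤ (S₀.card : ℝ) := by
      have h1 : ((covN μ F₂ F₁ ε).toNat : ℕ∞) = covN μ F₂ F₁ ε := ENat.coe_toNat hnetop
      have h2 : ((covN μ F₂ F₁ ε).toNat : ℕ∞) ≤ (S₀.card : ℕ∞) := h1 ▸ hcovle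
      exact_mod_cast h2
    have h1toNat : (1:ℝ) ≤ ((covN μ F₂ F₁ ε).toNat : ℝ) := by
      have h1 : (1:ℕ∞) ≤ covN μ F₂ F₁ ε := one_le_covN hF₁
      rw [← ENat.coe_toNat hnetop] at h1
      exact_mod_cast h1
    have hchain : ((covN μ F₂ F₁ ε).toNat : ℝ) ≤ Breal :=
      le_trans htoNat (le_trans (packBound S₀ hS₀sub hS₀sep) (by rw [hBreal]))
    have hlogle : elog2 (covN μ F₂ F₁ ε) ≤ Real.logb 2 Breal := by
      rw [elog2]
      exact (Real.logb_le_logb (by norm_num) (by linarith) (by linarith)).mpr hchain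
    have hlogB : Real.logb 2 Breal = 1 + E * (2 + Real.logb 2 (N:ℝ)) := by
      have h4Npos : (0:ℝ) < 4 * (N:ℝ) := by linarith
      rw [hBreal, Real.logb_mul (by norm_num) (by positivity)]
      have hpow : Real.logb 2 ((4 * (N:ℝ)) ^ E) = E * Real.logb 2 (4 * (N:ℝ)) := by
        rw [Real.logb, Real.logb, Real.log_rpow h4Npos]
        ring
      have h4 : Real.logb 2 (4 * (N:ℝ)) = 2 + Real.logb 2 (N:ℝ) := by
        rw [Real.logb_mul (by norm_num) (by positivity)]
        congr 1
        rw [show (4:ℝ) = 2^(2:ℕ) by norm_num, Real.logb_pow]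
        rw [Real.logb_self_eq_one (by norm_num)]
        norm_num
      rw [hpow, h4, Real.logb_self_eq_one (by norm_num)]
    rw [hLN]
    have hT : 1/2 < M₁ * M₂ / ε := by
      rw [lt_div_iff₀ hε]
      linarith
    have hT2 : 1 < 4 * (M₁ * M₂ / ε)^2 := by nlinarith
    have hEe : E = (64/9) * (M₁ * M₂ / ε)^2 := by
      rw [hE]
      field_simp
      ring
    calc elog2 (covN μ F₂ F₁ ε) ≤ Real.logb 2 Breal := hlogle
      _ = 1 + E * (2 + Real.logb 2 (N:ℝ)) := hlogB
      _ ≤ 20 * (M₁ * M₂ / ε) ^ 2 * (1 + Real.logb 2 (N:ℝ)) := by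
          rw [hEe]
          set T2 := (M₁ * M₂ / ε)^2
          set L := Real.logb 2 (N:ℝ)
          nlinarith [mul_le_mul_of_nonneg_right (le_of_lt hT2) hL0]
  · -- easy case : 2 M₁ M₂ ≤ ε
    push_neg at hcase
    obtain ⟨f₀, hf₀⟩ := id hF₁
    have hcov1 : IsCover μ F₂ F₁ ε {f₀} := by
      constructor
      · simpa using hf₀
      · intro f hf
        refine ⟨f₀, by simp, ?_⟩
        apply dnorm_le μ hF₂
        intro g hg
        have h1 : ∀ x, |(f - f₀) x| ≤ 2*M₁ := by
          intro x
          simp only [Pi.sub_apply]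
          calc |f x - f₀ x| ≤ |f x| + |f₀ x| := abs_sub _ _
            _ ≤ 2*M₁ := by linarith [hB₁ f hf x, hB₁ f₀ hf₀ x]
        calc |inn μ (f - f₀) g| ≤ (2*M₁) * M₂ :=
              abs_inn_le μ _ _ (2*M₁) M₂ h1 (hB₂ g hg) (by linarith) hM₂.le
          _ ≤ ε := by linarith
    have hle1 : covN μ F₂ F₁ ε ≤ 1 := by
      have h := covN_le_encard hcov1
      rwa [Set.encard_singleton] at h
    have hnetop : covN μ F₂ F₁ ε ≠ ⊤ := ne_top_of_le_ne_top (by simp) hle1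
    refine ⟨hnetop, ?_⟩
    have heq1 : covN μ F₂ F₁ ε = 1 := le_antisymm hle1 (one_le_covN hF₁)
    rw [heq1]
    have : elog2 1 = 0 := by
      rw [elog2]
      simp
    rw [this]
    exact hRHS0
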